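/- Let n ≥ 1 and λ_1, …, λ_n > 0. Let W, B, T = (T_1,…,T_n) and D = (D_1,…,D_n) be random variables on a common probability space such that: (i) W ≥ 0 and B ≥ 0 almost surely; (ii) W + B = ∑_{p=1}^n T_p almost surely; (iii) W and B are independent; (iv) the joint law of (T, D) is ν ⊗ κ, where ν is the law of T on [0,∞)^n and, for each t, κ(t) is the product over p = 1,…,n of Poisson distributions on ℕ with means λ_p t_p. Let β(ω) = E[e^{−ωB}]. Then for every ω with 0 ≤ ω ≤ min_p λ_p: E[ e^{−ωW} ] = (1/β(ω)) · E[ ∏_{p=1}^n (1 − ω/λ_p)^{D_p} ]. (Here 0^0 is taken to be 1; note β(ω) > 0 since B is almost surely finite.) -/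

import Mathlib

open MeasureTheory ProbabilityTheory

/-- The Poisson probability mass function with (real) mean `r`: `e^{-r} r^k / k!`. -/
noncomputable def poissonPdf (r : ℝ) (k : ℕ) : ℝ :=
  Real.exp (-r) * r ^ k / (Nat.factorial k)


lemma aux_tsum_pi_prod : ∀ (n : ℕ) (g : Fin n → ℕ → ENNReal),
    ∑' f : Fin n → ℕ, ∏ p, g p (f p) = ∏ p, ∑' k, g p k := by
  intro n
  induction n with
  | zero =>
    intro g
    simp only [Finset.univ_eq_empty, Finset.prod_empty]
    exact tsum_eq_single (fun i => i.elim0) (fun b hb => absurd (Subsingleton.elim b _) hb)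
  | succ m ih =>
    intro g
    rw [← (Fin.consEquiv (fun _ : Fin (m+1) => ℕ)).tsum_eq, ENNReal.tsum_prod']
    have h1 : ∀ (k : ℕ) (f : Fin m → ℕ),
        (∏ p : Fin (m+1), g p ((Fin.consEquiv fun _ => ℕ) (k, f) p))
          = g 0 k * ∏ i : Fin m, g i.succ (f i) := by
      intro k f
      rw [Fin.prod_univ_succ]
      simp [Fin.consEquiv]
    simp only [h1, ENNReal.tsum_mul_left, ih fun i => g i.succ]
    rw [ENNReal.tsum_mul_right, Fin.prod_univ_succ]

lemma aux_poisson_sum {c r : ℝ} (hc : 0 ≤ c) (hr : 0 ≤ r) :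
    ∑' k : ℕ, ENNReal.ofReal (c ^ k * poissonPdf r k)
      = ENNReal.ofReal (Real.exp ((c - 1) * r)) := by
  have hterm : ∀ k : ℕ, c ^ k * poissonPdf r k
      = Real.exp (-r) * ((c * r) ^ k / (Nat.factorial k)) := by
    intro k; simp only [poissonPdf, mul_pow]; ring
  have hs : HasSum (fun k : ℕ => c ^ k * poissonPdf r k) (Real.exp (-r) * Real.exp (c*r)) := by
    have h1 : HasSum (fun k : ℕ => (c*r) ^ k / (Nat.factorial k)) (Real.exp (c*r)) := by
      rw [Real.exp_eq_exp_ℝ]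
      exact NormedSpace.expSeries_div_hasSum_exp (c*r)
    simpa only [← hterm] using h1.mul_left (Real.exp (-r))
  have hnn : ∀ k : ℕ, 0 ≤ c ^ k * poissonPdf r k := by
    intro k
    have h : 0 ≤ poissonPdf r k := by
      unfold poissonPdf; positivity
    positivity
  have heq : (c - 1) * r = -r + c * r := by ring
  rw [← ENNReal.ofReal_tsum_of_nonneg hnn hs.summable, hs.tsum_eq, heq, Real.exp_add]

/-- The generalised distributional form of Little's law (Theorem 4.1 of the paper), in
abstract form: if `W, B ≥ 0` a.s. are independent with `W + B = ∑ p, T_p` a.s., and the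
pair `(T, D)` has law `ν ⊗ κ` with `κ` the product-Poisson kernel with means `λ_p t_p`,
then with `β(ω) = E[e^{-ωB}]`, for every `ω` with `0 ≤ ω ≤ min_p λ_p`,
`E[e^{-ωW}] = (1/β(ω)) E[∏ p, (1 - ω/λ_p) ^ D_p]`. -/
theorem stmt5 {Ω : Type*} [MeasurableSpace Ω] (μ : Measure Ω) [IsProbabilityMeasure μ]
    (n : ℕ) (hn : 0 < n) (lam : Fin n → ℝ) (hlam : ∀ p, 0 < lam p)
    (ν : Measure (Fin n → ℝ)) [IsProbabilityMeasure ν]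
    (hνsupp : ∀ᵐ t ∂ν, ∀ p, 0 ≤ t p)
    (T : Ω → Fin n → ℝ) (D : Ω → Fin n → ℕ) (hT : Measurable T) (hD : Measurable D)
    (hTlaw : Measure.map T μ = ν)
    (hjoint : ∀ A : Set (Fin n → ℝ), MeasurableSet A → ∀ f : Fin n → ℕ,
      μ (T ⁻¹' A ∩ {x | D x = f})
        = ∫⁻ t in A, ENNReal.ofReal (∏ p, poissonPdf (lam p * t p) (f p)) ∂ν)
    (W B : Ω → ℝ) (hW : Measurable W) (hB : Measurable B)
    (hW0 : ∀ᵐ x ∂μ, 0 ≤ W x) (hB0 : ∀ᵐ x ∂μ, 0 ≤ B x)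
    (hWB : ∀ᵐ x ∂μ, W x + B x = ∑ p, T x p)
    (hWBindep : IndepFun W B μ)
    (β : ℝ → ℝ) (hβ : ∀ ω : ℝ, β ω = ∫ x, Real.exp (-ω * B x) ∂μ)
    (ω : ℝ) (hω0 : 0 ≤ ω) (hωlam : ∀ p, ω ≤ lam p) :
    ∫ x, Real.exp (-ω * W x) ∂μ
      = (1 / β ω) * ∫ x, ∏ p, (1 - ω / lam p) ^ (D x p) ∂μ := by
  classical
  set c : Fin n → ℝ := fun p => 1 - ω / lam p with hc_def
  have hc0 : ∀ p, 0 ≤ c p := fun p => by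
    simp only [hc_def, sub_nonneg]
    exact (div_le_one (hlam p)).2 (hωlam p)
  -- measurability of the pdf in t
  have hpdf_meas : ∀ (f : Fin n → ℕ), Measurable fun t : Fin n → ℝ =>
      ENNReal.ofReal (∏ p, poissonPdf (lam p * t p) (f p)) := by
    intro f
    refine Measurable.ennreal_ofReal (Finset.measurable_prod _ fun p _ => ?_)
    have h1 : Measurable fun r : ℝ => poissonPdf r (f p) := by
      unfold poissonPdf
      exact ((Real.continuous_exp.comp continuous_neg).mul (continuous_pow _)).measurable.div_const _
    exact h1.comp (by fun_prop)
  -- Step A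
  have keyA : ∫⁻ x, ENNReal.ofReal (∏ p, c p ^ D x p) ∂μ
      = ∫⁻ t, ENNReal.ofReal (Real.exp (-ω * ∑ p, t p)) ∂ν := by
    calc ∫⁻ x, ENNReal.ofReal (∏ p, c p ^ D x p) ∂μ
        = ∫⁻ d, ENNReal.ofReal (∏ p, c p ^ d p) ∂(Measure.map D μ) := by
          rw [lintegral_map (measurable_of_countable _) hD]
      _ = ∑' f : Fin n → ℕ, ENNReal.ofReal (∏ p, c p ^ f p) * (Measure.map D μ) {f} :=
          lintegral_countable' _
      _ = ∑' f : Fin n → ℕ, ENNReal.ofReal (∏ p, c p ^ f p)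
            * ∫⁻ t, ENNReal.ofReal (∏ p, poissonPdf (lam p * t p) (f p)) ∂ν := by
          refine tsum_congr fun f => ?_
          rw [Measure.map_apply hD (measurableSet_singleton f)]
          have h2 : D ⁻¹' {f} = T ⁻¹' Set.univ ∩ {x | D x = f} := by
            ext x; simp
          rw [h2, hjoint Set.univ MeasurableSet.univ f, Measure.restrict_univ]
      _ = ∑' f : Fin n → ℕ, ∫⁻ t, ENNReal.ofReal (∏ p, c p ^ f p)
            * ENNReal.ofReal (∏ p, poissonPdf (lam p * t p) (f p)) ∂ν := by
          exact tsum_congr fun f => (lintegral_const_mul _ (hpdf_meas f)).symm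
      _ = ∫⁻ t, ∑' f : Fin n → ℕ, ENNReal.ofReal (∏ p, c p ^ f p)
            * ENNReal.ofReal (∏ p, poissonPdf (lam p * t p) (f p)) ∂ν :=
          (lintegral_tsum fun f => ((hpdf_meas f).const_mul _).aemeasurable).symm
      _ = ∫⁻ t, ENNReal.ofReal (Real.exp (-ω * ∑ p, t p)) ∂ν := by
          refine lintegral_congr_ae ?_
          filter_upwards [hνsupp] with t ht
          have hr : ∀ p, 0 ≤ lam p * t p := fun p => mul_nonneg (hlam p).le (ht p)
          have hsum : ∀ f : Fin n → ℕ,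
              ENNReal.ofReal (∏ p, c p ^ f p)
                * ENNReal.ofReal (∏ p, poissonPdf (lam p * t p) (f p))
              = ∏ p, ENNReal.ofReal (c p ^ f p * poissonPdf (lam p * t p) (f p)) := by
            intro f
            rw [← ENNReal.ofReal_mul (Finset.prod_nonneg fun p _ => pow_nonneg (hc0 p) _),
              ← Finset.prod_mul_distrib]
            refine ENNReal.ofReal_prod_of_nonneg fun p _ => ?_
            have h0 : 0 ≤ poissonPdf (lam p * t p) (f p) :=
              div_nonneg (mul_nonneg (Real.exp_pos _).le (pow_nonneg (hr p) _))
                (Nat.cast_nonneg _)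
            exact mul_nonneg (pow_nonneg (hc0 p) _) h0
          calc ∑' f : Fin n → ℕ, ENNReal.ofReal (∏ p, c p ^ f p)
                * ENNReal.ofReal (∏ p, poissonPdf (lam p * t p) (f p))
              = ∑' f : Fin n → ℕ, ∏ p, ENNReal.ofReal (c p ^ f p * poissonPdf (lam p * t p) (f p)) :=
                tsum_congr hsum
            _ = ∏ p, ∑' k : ℕ, ENNReal.ofReal (c p ^ k * poissonPdf (lam p * t p) k) :=
                aux_tsum_pi_prod n (fun p k => ENNReal.ofReal (c p ^ k * poissonPdf (lam p * t p) k))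
            _ = ∏ p, ENNReal.ofReal (Real.exp (-ω * t p)) := by
                refine Finset.prod_congr rfl fun p _ => ?_
                rw [aux_poisson_sum (hc0 p) (hr p)]
                rw [show (c p - 1) * (lam p * t p) = -ω * t p by
                  simp only [hc_def]; field_simp [(hlam p).ne']; ring]
            _ = ENNReal.ofReal (Real.exp (-ω * ∑ p, t p)) := by
                rw [← ENNReal.ofReal_prod_of_nonneg fun p _ => (Real.exp_pos _).le,
                  ← Real.exp_sum, ← Finset.mul_sum]
  -- measurability
  have hGmeas : Measurable fun x => ∏ p, c p ^ D x p :=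
    Finset.measurable_prod _ fun p _ =>
      (measurable_from_nat (f := fun k : ℕ => c p ^ k)).comp ((measurable_pi_apply p).comp hD)
  have hB_int : ∫ x, ∏ p, c p ^ D x p ∂μ
      = (∫⁻ x, ENNReal.ofReal (∏ p, c p ^ D x p) ∂μ).toReal :=
    integral_eq_lintegral_of_nonneg_ae
      (Filter.Eventually.of_forall fun x => Finset.prod_nonneg fun p _ => pow_nonneg (hc0 p) _)
      hGmeas.aestronglyMeasurable
  have hexp_meas : Measurable fun t : Fin n → ℝ => ENNReal.ofReal (Real.exp (-ω * ∑ p, t p)) :=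
    (Real.measurable_exp.comp
      ((Finset.univ.measurable_sum fun p _ => measurable_pi_apply p).const_mul (-ω))).ennreal_ofReal
  have keyC : ∫⁻ t, ENNReal.ofReal (Real.exp (-ω * ∑ p, t p)) ∂ν
      = ∫⁻ x, ENNReal.ofReal (Real.exp (-ω * (W x + B x))) ∂μ := by
    rw [← hTlaw, lintegral_map hexp_meas hT]
    refine lintegral_congr_ae ?_
    filter_upwards [hWB] with x hx
    rw [hx]
  have hD_int : ∫ x, Real.exp (-ω * (W x + B x)) ∂μ
      = (∫⁻ x, ENNReal.ofReal (Real.exp (-ω * (W x + B x))) ∂μ).toReal :=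
    integral_eq_lintegral_of_nonneg_ae (Filter.Eventually.of_forall fun x => (Real.exp_pos _).le)
      ((Real.measurable_exp.comp ((hW.add hB).const_mul (-ω))).aestronglyMeasurable)
  have hEq1 : ∫ x, ∏ p, c p ^ D x p ∂μ = ∫ x, Real.exp (-ω * (W x + B x)) ∂μ := by
    rw [hB_int, hD_int, keyA, keyC]
  have hindep2 : IndepFun (fun x => Real.exp (-ω * W x)) (fun x => Real.exp (-ω * B x)) μ :=
    hWBindep.comp (Real.measurable_exp.comp (measurable_id.const_mul (-ω)))
      (Real.measurable_exp.comp (measurable_id.const_mul (-ω)))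
  have hint : ∀ (f : Ω → ℝ), Measurable f → (∀ᵐ x ∂μ, 0 ≤ f x) →
      Integrable (fun x => Real.exp (-ω * f x)) μ := by
    intro f hf h0
    refine (integrable_const (1:ℝ)).mono'
      (Real.measurable_exp.comp (hf.const_mul (-ω))).aestronglyMeasurable ?_
    filter_upwards [h0] with x hx
    rw [Real.norm_eq_abs, abs_of_pos (Real.exp_pos _)]
    exact Real.exp_le_one_iff.2 (by nlinarith)
  have hintW := hint W hW hW0
  have hintB := hint B hB hB0
  have hEq2 : ∫ x, Real.exp (-ω * (W x + B x)) ∂μ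
      = (∫ x, Real.exp (-ω * W x) ∂μ) * β ω := by
    rw [hβ]
    have h3 : ∀ x, Real.exp (-ω * (W x + B x)) = Real.exp (-ω * W x) * Real.exp (-ω * B x) := by
      intro x; rw [← Real.exp_add]; congr 1; ring
    simp only [h3]
    exact IndepFun.integral_fun_mul_eq_mul_integral hindep2 hintW.aestronglyMeasurable
      hintB.aestronglyMeasurable
  have hβpos : 0 < β ω := by
    rw [hβ]
    refine (integral_pos_iff_support_of_nonneg_ae
      (Filter.Eventually.of_forall fun x => (Real.exp_pos _).le) hintB).2 ?_
    have h4 : Function.support (fun x => Real.exp (-ω * B x)) = Set.univ := by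
      ext x; simp [Function.support, (Real.exp_pos (-ω * B x)).ne']
    rw [h4]
    simp
  rw [hEq1.trans hEq2, one_div, mul_comm (∫ x, Real.exp (-ω * W x) ∂μ) (β ω), ← mul_assoc,
    inv_mul_cancel₀ hβpos.ne', one_mul]
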